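/- Let Δ = (𝔡₁,…,𝔡_d) be a system of delta operators on ℝ[x₁,…,x_d] with basic sequence (p_n)_{n∈ℕ^d}, let Z = (z_k)_{k∈ℕ^d} ⊆ ℝ^d be a grid with delta Gončarov polynomials t_k(·;Z), and let S ⊆ ℕ^d be a finite lower set (k ∈ S and j ≤ k imply j ∈ S). Then every polynomial P in the ℝ-linear span of {p_k : k ∈ S} satisfies the expansion P = ∑_{k∈S} (1/k!)·(𝔡^k P)(z_k)·t_k(·;Z). -/

import Mathlib

open MvPolynomial

noncomputable section

/-- The algebra of real polynomials in `d` variables `x₁, …, x_d`. -/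
abbrev MvP (d : ℕ) := MvPolynomial (Fin d) ℝ

/-- The shift operator `E_v : p(x) ↦ p(x + v)`. -/
def shiftOp {d : ℕ} (v : Fin d → ℝ) : Module.End ℝ (MvP d) :=
  (MvPolynomial.aeval (fun i => X i + C (v i)) : MvP d →ₐ[ℝ] MvP d).toLinearMap

/-- A linear operator on `ℝ[x₁,…,x_d]` is shift-invariant if it commutes with
every shift operator. -/
def ShiftInv {d : ℕ} (L : Module.End ℝ (MvP d)) : Prop :=
  ∀ v : Fin d → ℝ, L * shiftOp v = shiftOp v * L

/-- `(𝔡₁, …, 𝔡_d)` is a system of delta operators: each `𝔡_i` is shift-invariant,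
each `𝔡_i` maps every homogeneous linear polynomial to a constant, and for a
nonzero homogeneous linear polynomial at least one `𝔡_i p` is nonzero. -/
def IsDeltaSystem {d : ℕ} (D : Fin d → Module.End ℝ (MvP d)) : Prop :=
  (∀ i, ShiftInv (D i)) ∧
  ∀ a : Fin d → ℝ,
    (∀ i, ∃ c : ℝ, D i (∑ j, C (a j) * X j) = C c) ∧
    ((∑ j, C (a j) * X j) ≠ 0 → ∃ i, D i (∑ j, C (a j) * X j) ≠ 0)


/-- `𝔡^k = 𝔡₁^{k₁} ∘ ⋯ ∘ 𝔡_d^{k_d}`. -/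
def dpow {d : ℕ} (D : Fin d → Module.End ℝ (MvP d)) (k : Fin d → ℕ) :
    Module.End ℝ (MvP d) :=
  (List.ofFn fun i => (D i) ^ (k i)).prod

/-- `(p_n)_{n ∈ ℕ^d}` is a basic sequence of the system `D`:
`deg p_n = |n|`, `p_0 = 1`, `p_n(0) = 0` for `|n| ≥ 1`, and
`𝔡_i p_n = n_i • p_{n - e_i}`. -/
def IsBasicSeq {d : ℕ} (D : Fin d → Module.End ℝ (MvP d))
    (p : (Fin d → ℕ) → MvP d) : Prop :=
  (∀ n : Fin d → ℕ, (p n).totalDegree = ∑ i, n i) ∧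
  p 0 = 1 ∧
  (∀ n : Fin d → ℕ, 1 ≤ ∑ i, n i → eval (0 : Fin d → ℝ) (p n) = 0) ∧
  ∀ (n : Fin d → ℕ) (i : Fin d), D i (p n) = (n i : ℝ) • p (n - Pi.single i 1)

/-- `Π_n(Δ)`: the span of the basic polynomials `p_k` with `k ≤ n`
(componentwise order). -/
def Pin {d : ℕ} (p : (Fin d → ℕ) → MvP d) (n : Fin d → ℕ) : Submodule ℝ (MvP d) :=
  Submodule.span ℝ (p '' {k | k ≤ n})

/-- `n! = n₁! ⋯ n_d!` as a real number. -/
def natFact {d : ℕ} (n : Fin d → ℕ) : ℝ := ∏ i, (Nat.factorial (n i) : ℝ)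

/-- `t` is the delta Gončarov polynomial `t_n(·;Z)` for the system `D` with
basic sequence `p` and grid `Z`: `t ∈ Π_n(Δ)` and
`(𝔡^k t)(z_k) = n!·δ_{k,n}` for all `k ≤ n`. -/
def IsGoncarov {d : ℕ} (D : Fin d → Module.End ℝ (MvP d))
    (p : (Fin d → ℕ) → MvP d) (Z : (Fin d → ℕ) → (Fin d → ℝ))
    (n : Fin d → ℕ) (t : MvP d) : Prop :=
  t ∈ Pin p n ∧
  ∀ k ≤ n, eval (Z k) (dpow D k t) = if k = n then natFact n else 0

/- ### Auxiliary lemmas -/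

lemma natFact_ne_zero {d : ℕ} (n : Fin d → ℕ) : natFact n ≠ 0 := by
  refine Finset.prod_ne_zero_iff.2 fun i _ => ?_
  exact_mod_cast (Nat.factorial_ne_zero (n i))

lemma pow_basic {d : ℕ} {D : Fin d → Module.End ℝ (MvP d)}
    {p : (Fin d → ℕ) → MvP d} (hp : IsBasicSeq D p) (i : Fin d) (j : ℕ)
    (n : Fin d → ℕ) :
    ((D i) ^ j) (p n) = ((n i).descFactorial j : ℝ) • p (n - Pi.single i j) := by
  induction j generalizing n with
  | zero => simp
  | succ j ih =>
    have h1 : (D i) ^ (j + 1) = (D i) ^ j * D i := pow_succ _ _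
    rw [h1, Module.End.mul_apply, hp.2.2.2 n i, map_smul, ih]
    have harg : n - Pi.single i 1 - Pi.single i j = n - Pi.single i (j + 1) := by
      funext i'
      by_cases h : i' = i
      · subst h; simp [Pi.single_apply]; omega
      · simp [Pi.single_apply, h]
    have hco : (n - Pi.single i 1 : Fin d → ℕ) i = n i - 1 := by simp
    rw [harg, hco, smul_smul]
    congr 1
    by_cases h0 : n i = 0
    · simp [h0]
    · obtain ⟨m, hm⟩ := Nat.exists_eq_succ_of_ne_zero h0
      rw [hm]
      push_cast [Nat.succ_sub_one, Nat.succ_descFactorial_succ]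
      ring

lemma list_basic {d : ℕ} {D : Fin d → Module.End ℝ (MvP d)}
    {p : (Fin d → ℕ) → MvP d} (hp : IsBasicSeq D p) (k : Fin d → ℕ) :
    ∀ (l : List (Fin d)), l.Nodup → ∀ n : Fin d → ℕ,
      ((l.map fun i => (D i) ^ (k i)).prod) (p n)
        = (∏ i ∈ l.toFinset, ((n i).descFactorial (k i) : ℝ)) •
            p (n - fun i => if i ∈ l then k i else 0) := by
  intro l
  induction l with
  | nil =>
      intro _ n
      have h1 : (n - fun _ : Fin d => 0) = n := by funext i; simp
      simp only [List.map_nil, List.prod_nil, Module.End.one_apply,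
        List.toFinset_nil, Finset.prod_empty, List.not_mem_nil, if_false, h1,
        one_smul]
  | cons i l ih =>
      intro hnd n
      have hi : i ∉ l := (List.nodup_cons.1 hnd).1
      have hl : l.Nodup := (List.nodup_cons.1 hnd).2
      rw [List.map_cons, List.prod_cons, Module.End.mul_apply, ih hl, map_smul,
        pow_basic hp]
      have hni : ((n - fun i' => if i' ∈ l then k i' else 0) i) = n i := by
        simp [hi]
      have harg : ((n - fun i' => if i' ∈ l then k i' else 0) - Pi.single i (k i))
          = n - fun i' => if i' ∈ i :: l then k i' else 0 := by
        funext i'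
        by_cases h : i' = i
        · subst h; simp [Pi.single_apply, hi]
        · simp [Pi.single_apply, h]
      rw [hni, harg, smul_smul]
      congr 1
      have hTF : (i :: l).toFinset = insert i l.toFinset := by simp
      rw [hTF, Finset.prod_insert (by simpa using hi), mul_comm]

lemma dpow_basic {d : ℕ} {D : Fin d → Module.End ℝ (MvP d)}
    {p : (Fin d → ℕ) → MvP d} (hp : IsBasicSeq D p) (k n : Fin d → ℕ) :
    dpow D k (p n) = (∏ i, ((n i).descFactorial (k i) : ℝ)) • p (n - k) := by
  have h := list_basic hp k (List.finRange d) (List.nodup_finRange d) n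
  rw [dpow, List.ofFn_eq_map]
  rw [h]
  have h1 : (n - fun i => if i ∈ List.finRange d then k i else 0) = n - k := by
    funext i; simp [List.mem_finRange]
  have h2 : (List.finRange d).toFinset = Finset.univ := List.toFinset_finRange d
  rw [h1, h2]

lemma dpow_basic_not_le {d : ℕ} {D : Fin d → Module.End ℝ (MvP d)}
    {p : (Fin d → ℕ) → MvP d} (hp : IsBasicSeq D p) {k n : Fin d → ℕ}
    (h : ¬ k ≤ n) : dpow D k (p n) = 0 := by
  rw [dpow_basic hp]
  obtain ⟨i, hi⟩ : ∃ i, n i < k i := by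
    by_contra hc
    push_neg at hc
    exact h fun i => hc i
  have : ((n i).descFactorial (k i) : ℝ) = 0 := by
    exact_mod_cast congrArg Nat.cast (Nat.descFactorial_eq_zero_iff_lt.2 hi)
  rw [Finset.prod_eq_zero (Finset.mem_univ i) this, zero_smul]

lemma dpow_basic_self {d : ℕ} {D : Fin d → Module.End ℝ (MvP d)}
    {p : (Fin d → ℕ) → MvP d} (hp : IsBasicSeq D p) (k : Fin d → ℕ) :
    dpow D k (p k) = natFact k • (1 : MvP d) := by
  have hk : k - k = 0 := by funext i; simp
  rw [dpow_basic hp, hk, hp.2.1]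
  congr 1
  unfold natFact
  exact Finset.prod_congr rfl fun i _ => by rw [Nat.descFactorial_self]

/-- `dpow D j` annihilates `Π_m` when `¬ j ≤ m`. -/
lemma dpow_kills_Pin {d : ℕ} {D : Fin d → Module.End ℝ (MvP d)}
    {p : (Fin d → ℕ) → MvP d} (hp : IsBasicSeq D p) {j m : Fin d → ℕ}
    (h : ¬ j ≤ m) {q : MvP d} (hq : q ∈ Pin p m) : dpow D j q = 0 := by
  have hle : Pin p m ≤ LinearMap.ker (dpow D j) := by
    rw [Pin, Submodule.span_le]
    rintro _ ⟨k, hk, rfl⟩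
    have hk' : k ≤ m := hk
    have : ¬ j ≤ k := fun hjk => h (hjk.trans hk')
    simpa [LinearMap.mem_ker] using dpow_basic_not_le hp this
  exact hle hq

/-- The key functional identity on Gončarov polynomials, for all `j`. -/
lemma goncarov_eval {d : ℕ} {D : Fin d → Module.End ℝ (MvP d)}
    {p : (Fin d → ℕ) → MvP d} (hp : IsBasicSeq D p)
    {Z : (Fin d → ℕ) → (Fin d → ℝ)} {k : Fin d → ℕ} {tk : MvP d}
    (htk : IsGoncarov D p Z k tk) (j : Fin d → ℕ) :
    eval (Z j) (dpow D j tk) = if j = k then natFact k else 0 := by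
  by_cases hjk : j ≤ k
  · exact htk.2 j hjk
  · have h0 : dpow D j tk = 0 := dpow_kills_Pin hp hjk htk.1
    have hne : j ≠ k := fun h => hjk (h ▸ le_refl k)
    simp [h0, hne]

/-- the crux: a polynomial in the span with all relevant functionals vanishing
has vanishing coefficients. -/
lemma coeffs_zero {d : ℕ} {D : Fin d → Module.End ℝ (MvP d)}
    {p : (Fin d → ℕ) → MvP d} (hp : IsBasicSeq D p)
    (Z : (Fin d → ℕ) → (Fin d → ℝ)) (S : Finset (Fin d → ℕ))
    (a : (Fin d → ℕ) → ℝ)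
    (h0 : ∀ j ∈ S, eval (Z j) (dpow D j (∑ k ∈ S, a k • p k)) = 0) :
    ∀ k ∈ S, a k = 0 := by
  classical
  -- strong induction on the number of elements of S above k
  suffices H : ∀ N : ℕ, ∀ k ∈ S, (S.filter (fun j => k ≤ j)).card ≤ N → a k = 0 by
    intro k hk
    exact H (S.filter (fun j => k ≤ j)).card k hk le_rfl
  intro N
  induction N with
  | zero =>
      intro k hk hcard
      exfalso
      have : k ∈ S.filter (fun j => k ≤ j) := Finset.mem_filter.2 ⟨hk, le_rfl⟩
      have := Finset.card_pos.2 ⟨k, this⟩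
      omega
  | succ N ih =>
      intro k hk hcard
      -- all strictly larger indices have vanishing coefficients
      have hbig : ∀ j ∈ S, k ≤ j → j ≠ k → a j = 0 := by
        intro j hj hkj hne
        refine ih j hj ?_
        have hsub : S.filter (fun m => j ≤ m) ⊆ (S.filter (fun m => k ≤ m)).erase k := by
          intro m hm
          rw [Finset.mem_filter] at hm
          refine Finset.mem_erase.2 ⟨?_, Finset.mem_filter.2 ⟨hm.1, hkj.trans hm.2⟩⟩
          rintro rfl
          exact hne (le_antisymm hm.2 hkj)
        have h1 := Finset.card_le_card hsub
        have h2 : ((S.filter (fun m => k ≤ m)).erase k).card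
            = (S.filter (fun m => k ≤ m)).card - 1 :=
          Finset.card_erase_of_mem (Finset.mem_filter.2 ⟨hk, le_rfl⟩)
        omega
      -- evaluate the functional at k
      have hev := h0 k hk
      rw [map_sum, map_sum] at hev
      have hterm : ∀ j ∈ S, eval (Z k) (dpow D k (a j • p j))
          = if j = k then a k * natFact k else 0 := by
        intro j hj
        rw [map_smul, smul_eval]
        by_cases hkj : k ≤ j
        · by_cases hjk : j = k
          · subst hjk
            rw [dpow_basic_self hp]
            simp [smul_eval, mul_comm]
          · rw [hbig j hj hkj hjk]
            simp [hjk]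
        · rw [dpow_basic_not_le hp hkj]
          have : j ≠ k := fun h => hkj (h ▸ le_refl k)
          simp [this]
      rw [Finset.sum_congr rfl hterm, Finset.sum_ite_eq' S k
        (fun _ => a k * natFact k)] at hev
      simp only [hk, if_true] at hev
      have := natFact_ne_zero k
      rcases mul_eq_zero.1 hev with h | h
      · exact h
      · exact absurd h this

/-- every `P` in the span of `{p_k : k ∈ S}` (with `S` a finite
lower set) expands as `P = ∑_{k ∈ S} (1/k!)·(𝔡^k P)(z_k) • t_k(·;Z)`. -/
theorem goncarov_expansion {d : ℕ} (hd : 1 ≤ d)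
    (D : Fin d → Module.End ℝ (MvP d)) (hD : IsDeltaSystem D)
    (p : (Fin d → ℕ) → MvP d) (hp : IsBasicSeq D p)
    (Z : (Fin d → ℕ) → (Fin d → ℝ))
    (t : (Fin d → ℕ) → MvP d) (ht : ∀ k, IsGoncarov D p Z k (t k))
    (S : Finset (Fin d → ℕ)) (hS : ∀ k ∈ S, ∀ j ≤ k, j ∈ S) :
    ∀ P ∈ Submodule.span ℝ (p '' ↑S),
      P = ∑ k ∈ S, ((natFact k)⁻¹ * eval (Z k) ((dpow D k) P)) • t k := by
  intro P hP
  set Q : MvP d := P - ∑ k ∈ S, ((natFact k)⁻¹ * eval (Z k) ((dpow D k) P)) • t k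
    with hQdef
  -- step 1: all functionals of Q indexed by S vanish
  have hlam : ∀ j ∈ S, eval (Z j) (dpow D j Q) = 0 := by
    intro j hj
    rw [hQdef, map_sub, map_sum, map_sub, map_sum]
    have hterm : ∀ k ∈ S,
        eval (Z j) (dpow D j (((natFact k)⁻¹ * eval (Z k) ((dpow D k) P)) • t k))
          = if k = j then eval (Z j) (dpow D j P) else 0 := by
      intro k hk
      rw [map_smul, smul_eval, goncarov_eval hp (ht k) j]
      by_cases h : k = j
      · subst h
        simp only [if_pos rfl]
        field_simp
        simp only [if_true]
        rw [mul_div_assoc, div_self (natFact_ne_zero k), mul_one]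
      · have h' : j ≠ k := fun hh => h hh.symm
        simp [h, h']
    rw [Finset.sum_congr rfl hterm,
      Finset.sum_ite_eq' S j (fun _ => eval (Z j) (dpow D j P))]
    simp [hj]
  -- step 2: Q lies in the span
  have hQmem : Q ∈ Submodule.span ℝ (p '' ↑S) := by
    refine Submodule.sub_mem _ hP (Submodule.sum_mem _ fun k hk => ?_)
    refine Submodule.smul_mem _ _ ?_
    have h1 : Pin p k ≤ Submodule.span ℝ (p '' ↑S) := by
      refine Submodule.span_mono (Set.image_mono ?_)
      intro j hj
      exact hS k hk j hj
    exact h1 (ht k).1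
  -- step 3: Q is a combination of basic polynomials, functionals kill coeffs
  obtain ⟨l, hlsupp, hlQ⟩ :=
    (Finsupp.mem_span_image_iff_linearCombination ℝ).1 hQmem
  have hQsum : Q = ∑ k ∈ S, l k • p k := by
    rw [← hlQ, Finsupp.linearCombination_apply, Finsupp.sum]
    refine Finset.sum_subset ?_ ?_
    · intro k hk
      exact (Finsupp.mem_supported ℝ l).1 hlsupp hk
    · intro k _ hk
      rw [Finsupp.notMem_support_iff.1 hk, zero_smul]
  have hcoeff : ∀ k ∈ S, l k = 0 := by
    refine coeffs_zero hp Z S (fun k => l k) fun j hj => ?_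
    rw [← hQsum]
    exact hlam j hj
  have hQ0 : Q = 0 := by
    rw [hQsum]
    exact Finset.sum_eq_zero fun k hk => by rw [hcoeff k hk, zero_smul]
  exact sub_eq_zero.1 hQ0

end
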